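/- Let T be a finite tree rooted at a vertex r and let M_0 be a dominating set of T such that (a) every supported vertex of M_0 other than r does not have its parent in M_0 (and if r is supported this condition is vacuous for r), and (b) no supported vertex of M_0 is a descendant of another supported vertex of M_0. Then there exists a minimal dominating set M of T with |M| ≥ |M_0|. -/

import Mathlib

open scoped Classical

variable {V : Type*} [Fintype V] [DecidableEq V]

/-- `S` is a dominating set of `G`: every vertex is in `S` or adjacent to a vertex of `S`. -/
def IsDomSet (G : SimpleGraph V) (S : Finset V) : Prop :=
  ∀ v : V, v ∈ S ∨ ∃ u ∈ S, G.Adj u v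

/-- `S` is a minimal dominating set: it is dominating and no proper subset is dominating. -/
def MinimalDomSet (G : SimpleGraph V) (S : Finset V) : Prop :=
  IsDomSet G S ∧ ∀ T : Finset V, T ⊂ S → ¬ IsDomSet G T

/-- `d_i(G)`: the number of dominating sets of `G` of cardinality `i`. -/
noncomputable def domCount (G : SimpleGraph V) (i : ℕ) : ℕ :=
  (Finset.univ.filter fun S : Finset V => IsDomSet G S ∧ S.card = i).card

/-- `a(S)`: the set of critical vertices of a dominating set `S`. -/
noncomputable def aSet (G : SimpleGraph V) (S : Finset V) : Finset V :=
  S.filter fun v => ¬ IsDomSet G (S.erase v)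

/-- `a(G,i)`: the sum of `|a(S)|` over all dominating sets `S` of cardinality `i`. -/
noncomputable def aTotal (G : SimpleGraph V) (i : ℕ) : ℕ :=
  ∑ S ∈ Finset.univ.filter (fun S : Finset V => IsDomSet G S ∧ S.card = i), (aSet G S).card

/-- `γ(G)`: the minimum cardinality of a dominating set. -/
noncomputable def gamma (G : SimpleGraph V) : ℕ :=
  sInf {k | ∃ S : Finset V, IsDomSet G S ∧ S.card = k}

/-- `Γ(G)`: the maximum cardinality of a minimal dominating set. -/
noncomputable def bigGamma (G : SimpleGraph V) : ℕ :=
  sSup {k | ∃ S : Finset V, MinimalDomSet G S ∧ S.card = k}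

/-- The closed neighbourhood `N[v]` as a finset. -/
noncomputable def closedNbhd (G : SimpleGraph V) (v : V) : Finset V :=
  Finset.univ.filter fun u => u = v ∨ G.Adj v u

/-- `N_1(S)`: vertices outside `S` with exactly one closed neighbour in `S`. -/
noncomputable def N1Set (G : SimpleGraph V) (S : Finset V) : Finset V :=
  Finset.univ.filter fun v => v ∉ S ∧ (closedNbhd G v ∩ S).card = 1

/-- `N_2(S)`: vertices outside `S` with at least two closed neighbours in `S`. -/
noncomputable def N2Set (G : SimpleGraph V) (S : Finset V) : Finset V :=
  Finset.univ.filter fun v => v ∉ S ∧ 2 ≤ (closedNbhd G v ∩ S).card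

/-- `a_1(S)`: critical vertices whose closed neighbourhood meets `N_1(S)`. -/
noncomputable def a1Set (G : SimpleGraph V) (S : Finset V) : Finset V :=
  (aSet G S).filter fun v => (closedNbhd G v ∩ N1Set G S).Nonempty

/-- `a_2(S)`: critical vertices whose closed neighbourhood misses `N_1(S)`. -/
noncomputable def a2Set (G : SimpleGraph V) (S : Finset V) : Finset V :=
  (aSet G S).filter fun v => closedNbhd G v ∩ N1Set G S = ∅

/-- In the tree `G` rooted at `r`, `x` is a descendant of `y`:
`y` lies on the unique path from `x` to the root `r`. -/
def Descendant (G : SimpleGraph V) (r x y : V) : Prop :=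
  G.dist x r = G.dist x y + G.dist y r

/-- `x` is a child of `y` in `G` rooted at `r`. -/
def IsChild (G : SimpleGraph V) (r x y : V) : Prop :=
  Descendant G r x y ∧ G.dist y x = 1

/-- `p` is the parent of `x` in `G` rooted at `r`. -/
def IsParent (G : SimpleGraph V) (r p x : V) : Prop :=
  IsChild G r x p

/-- `x` is a grandchild of `y` in `G` rooted at `r`. -/
def IsGrandchild (G : SimpleGraph V) (r x y : V) : Prop :=
  Descendant G r x y ∧ G.dist y x = 2

set_option linter.unusedSectionVars false
set_option linter.unusedVariables false
set_option maxHeartbeats 1000000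

open SimpleGraph Finset

lemma tree_adj_dist (G : SimpleGraph V) (hT : G.IsTree) (r : V) {a b : V} (hab : G.Adj a b) :
    G.dist a r = G.dist b r + 1 ∨ G.dist b r = G.dist a r + 1 := by
  have hconn := hT.isConnected
  have h1 : G.dist a b = 1 := SimpleGraph.dist_eq_one_iff_adj.mpr hab
  have h2 : G.dist b a = 1 := SimpleGraph.dist_eq_one_iff_adj.mpr hab.symm
  have t1 : G.dist a r ≤ G.dist a b + G.dist b r := hconn.dist_triangle
  have t2 : G.dist b r ≤ G.dist b a + G.dist a r := hconn.dist_triangle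
  have hne : G.dist a r ≠ G.dist b r := by
    intro heq
    obtain ⟨q, hqp, hql⟩ := hconn.exists_path_of_dist b r
    by_cases hmem : a ∈ q.support
    · have hsplit := q.take_spec hmem
      have hlen : (q.takeUntil a hmem).length + (q.dropUntil a hmem).length = q.length := by
        rw [← SimpleGraph.Walk.length_append, hsplit]
      have h3 : G.dist b a ≤ (q.takeUntil a hmem).length := G.dist_le _
      have h4 : G.dist a r ≤ (q.dropUntil a hmem).length := G.dist_le _
      omega
    · have hwp : (SimpleGraph.Walk.cons hab q).IsPath := by
        rw [SimpleGraph.Walk.cons_isPath_iff]; exact ⟨hqp, hmem⟩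
      obtain ⟨p, hpp, hpl⟩ := hconn.exists_path_of_dist a r
      have hu := hT.IsAcyclic.path_unique ⟨SimpleGraph.Walk.cons hab q, hwp⟩ ⟨p, hpp⟩
      have hlen := congrArg (fun x : G.Path a r => (x : G.Walk a r).length) hu
      simp only [SimpleGraph.Walk.length_cons] at hlen
      omega
  omega

lemma tree_parent_unique (G : SimpleGraph V) (hT : G.IsTree) (r : V) {a b b' : V}
    (hb : G.Adj a b) (hb' : G.Adj a b')
    (h : G.dist b r + 1 = G.dist a r) (h' : G.dist b' r + 1 = G.dist a r) : b = b' := by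
  have hconn := hT.isConnected
  obtain ⟨q, hqp, hql⟩ := hconn.exists_path_of_dist b r
  obtain ⟨q', hq'p, hq'l⟩ := hconn.exists_path_of_dist b' r
  have hw : (SimpleGraph.Walk.cons hb q).length = G.dist a r := by
    simp only [SimpleGraph.Walk.length_cons]; omega
  have hw' : (SimpleGraph.Walk.cons hb' q').length = G.dist a r := by
    simp only [SimpleGraph.Walk.length_cons]; omega
  have hwp := (SimpleGraph.Walk.cons hb q).isPath_of_length_eq_dist hw
  have hw'p := (SimpleGraph.Walk.cons hb' q').isPath_of_length_eq_dist hw'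
  have hu := hT.IsAcyclic.path_unique ⟨SimpleGraph.Walk.cons hb q, hwp⟩
    ⟨SimpleGraph.Walk.cons hb' q', hw'p⟩
  have h2 := congrArg (fun x : G.Path a r => (x : G.Walk a r).getVert 1) hu
  simpa only [SimpleGraph.Walk.getVert_cons_succ, SimpleGraph.Walk.getVert_zero] using h2

lemma tree_adj_dist_ne (G : SimpleGraph V) (hT : G.IsTree) (r : V) {a b : V} (hab : G.Adj a b) :
    G.dist a r ≠ G.dist b r := by
  rcases tree_adj_dist G hT r hab with h | h <;> omega

lemma isDomSet_mono (G : SimpleGraph V) {S T : Finset V} (h : S ⊆ T) (hS : IsDomSet G S) :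
    IsDomSet G T := fun v =>
  (hS v).elim (fun hv => Or.inl (h hv)) (fun ⟨u, hu, ha⟩ => Or.inr ⟨u, h hu, ha⟩)

lemma not_domset_witness {G : SimpleGraph V} {S : Finset V} (h : ¬ IsDomSet G S) :
    ∃ z, z ∉ S ∧ ∀ u ∈ S, ¬ G.Adj u z := by
  unfold IsDomSet at h
  push_neg at h
  obtain ⟨z, hz⟩ := h
  exact ⟨z, hz.1, hz.2⟩

lemma isParent_of_adj (G : SimpleGraph V) (r : V) {q x : V} (h : G.Adj q x)
    (hd : G.dist q r + 1 = G.dist x r) : IsParent G r q x := by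
  have h1 : G.dist x q = 1 := SimpleGraph.dist_eq_one_iff_adj.mpr h.symm
  have h2 : G.dist q x = 1 := SimpleGraph.dist_eq_one_iff_adj.mpr h
  exact ⟨show G.dist x r = G.dist x q + G.dist q r by omega, h2⟩

lemma adj_dist_of_isParent (G : SimpleGraph V) (r : V) {q x : V} (h : IsParent G r q x) :
    G.Adj q x ∧ G.dist q r + 1 = G.dist x r := by
  obtain ⟨hd, h1⟩ := h
  have hadj : G.Adj q x := SimpleGraph.dist_eq_one_iff_adj.mp h1
  have h2 : G.dist x q = 1 := SimpleGraph.dist_eq_one_iff_adj.mpr hadj.symm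
  have hd' : G.dist x r = G.dist x q + G.dist q r := hd
  exact ⟨hadj, by omega⟩

lemma not_isParent_root (G : SimpleGraph V) (r q : V) : ¬ IsParent G r q r := by
  rintro ⟨hd, h1⟩
  have hd' : G.dist r r = G.dist r q + G.dist q r := hd
  have h0 : G.dist r r = 0 := SimpleGraph.dist_self
  have hc : G.dist r q = G.dist q r := SimpleGraph.dist_comm
  omega

lemma step_lemma (G : SimpleGraph V) (hT : G.IsTree) (r : V) (D : Finset V)
    (hdom : IsDomSet G D)
    (hinv : ∀ x ∈ D, IsDomSet G (D.erase x) → ∀ q : V, IsParent G r q x → q ∉ D)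
    (hex : ∃ v ∈ D, IsDomSet G (D.erase v)) :
    ∃ D' : Finset V,
      IsDomSet G D' ∧
      (∀ x ∈ D', IsDomSet G (D'.erase x) → ∀ q : V, IsParent G r q x → q ∉ D') ∧
      D.card ≤ D'.card ∧
      (∑ w ∈ D, G.dist w r) + 1 ≤ ∑ w ∈ D', G.dist w r := by
  classical
  set S := D.filter (fun x => IsDomSet G (D.erase x)) with hS
  have hSne : S.Nonempty := by
    obtain ⟨v, hv, hs⟩ := hex
    exact ⟨v, by simp [hS, hv, hs]⟩
  obtain ⟨v, hvS, hvmax⟩ := S.exists_max_image (fun x => G.dist x r) hSne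
  rw [hS, mem_filter] at hvS
  obtain ⟨hv, hvsup⟩ := hvS
  -- the dominator of v in D \ {v} is a child c
  rcases hvsup v with hvin | ⟨c, hcmem, hcadj⟩
  · exact absurd hvin (Finset.notMem_erase _ _)
  have hc : c ∈ D := Finset.mem_of_mem_erase hcmem
  have hcv : c ≠ v := Finset.ne_of_mem_erase hcmem
  have hdc : G.dist c r = G.dist v r + 1 := by
    rcases tree_adj_dist G hT r hcadj with h | h
    · exact h
    · exact absurd hc (hinv v hv hvsup c (isParent_of_adj G r hcadj (by omega)))
  -- c is critical
  have hcrit : ¬ IsDomSet G (D.erase c) := by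
    intro h
    have hmem : c ∈ S := by rw [hS, mem_filter]; exact ⟨hc, h⟩
    have := hvmax c hmem
    omega
  -- private neighbours of c
  set P := Finset.univ.filter
      (fun z => z ∉ D ∧ G.Adj c z ∧ ∀ w ∈ D, G.Adj w z → w = c) with hP
  have hPmem : ∀ z : V, z ∈ P ↔ (z ∉ D ∧ G.Adj c z ∧ ∀ w ∈ D, G.Adj w z → w = c) := by
    intro z; simp [hP]
  have hPdepth : ∀ z ∈ P, G.dist z r = G.dist c r + 1 := by
    intro z hz
    obtain ⟨hzD, hzadj, _⟩ := (hPmem z).mp hz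
    rcases tree_adj_dist G hT r hzadj with h | h
    · exfalso
      have hzv : z = v := tree_parent_unique G hT r hzadj hcadj (by omega) (by omega)
      exact hzD (hzv ▸ hv)
    · exact h
  have hPne : P.Nonempty := by
    obtain ⟨z, hz1, hz2⟩ := not_domset_witness hcrit
    have hzD : z ∉ D := by
      intro h
      have hzc : z = c := by
        by_contra hne
        exact hz1 (Finset.mem_erase.mpr ⟨hne, h⟩)
      subst hzc
      exact hz2 v (Finset.mem_erase.mpr ⟨hcv.symm, hv⟩) hcadj.symm
    have hcz : G.Adj c z := by
      rcases hdom z with h | ⟨w, hw, hadj⟩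
      · exact absurd h hzD
      · by_cases hwc : w = c
        · exact hwc ▸ hadj
        · exact absurd hadj (hz2 w (Finset.mem_erase.mpr ⟨hwc, hw⟩))
    have hall : ∀ w ∈ D, G.Adj w z → w = c := by
      intro w hw hadj
      by_contra hne
      exact hz2 w (Finset.mem_erase.mpr ⟨hne, hw⟩) hadj
    exact ⟨z, (hPmem z).mpr ⟨hzD, hcz, hall⟩⟩
  -- the new set
  refine ⟨(D.erase c) ∪ P, ?_, ?_, ?_, ?_⟩
  case _ => -- dominating
    intro t
    rcases hdom t with htD | ⟨w, hw, hwadj⟩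
    · by_cases htc : t = c
      · subst htc
        exact Or.inr ⟨v, Finset.mem_union_left _ (Finset.mem_erase.mpr ⟨hcv.symm, hv⟩), hcadj.symm⟩
      · exact Or.inl (Finset.mem_union_left _ (Finset.mem_erase.mpr ⟨htc, htD⟩))
    · by_cases hwc : w = c
      · rw [hwc] at hwadj
        by_cases hall : ∀ w' ∈ D, G.Adj w' t → w' = c
        · by_cases htD : t ∈ D
          · refine Or.inl (Finset.mem_union_left _ (Finset.mem_erase.mpr ⟨?_, htD⟩))
            intro h
            exact G.irrefl (h ▸ hwadj)
          · exact Or.inl (Finset.mem_union_right _ ((hPmem t).mpr ⟨htD, hwadj, hall⟩))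
        · push_neg at hall
          obtain ⟨w', hw', hadj', hne'⟩ := hall
          exact Or.inr ⟨w', Finset.mem_union_left _ (Finset.mem_erase.mpr ⟨hne', hw'⟩), hadj'⟩
      · exact Or.inr ⟨w, Finset.mem_union_left _ (Finset.mem_erase.mpr ⟨hwc, hw⟩), hwadj⟩
  case _ => -- invariant
    intro x hxD' hxsup q hq hqD'
    obtain ⟨hqadj, hqd⟩ := adj_dist_of_isParent G r hq
    rcases Finset.mem_union.mp hxD' with hxE | hxP0
    · -- x ∈ D.erase c
      have hx : x ∈ D := Finset.mem_of_mem_erase hxE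
      have hxc : x ≠ c := Finset.ne_of_mem_erase hxE
      rcases Finset.mem_union.mp hqD' with hqE | hqP
      · -- q ∈ D
        have hqD : q ∈ D := Finset.mem_of_mem_erase hqE
        by_cases hxDsup : IsDomSet G (D.erase x)
        · exact hinv x hx hxDsup q hq hqD
        · obtain ⟨z, hz1, hz2⟩ := not_domset_witness hxDsup
          have hzD : z ∈ D → z = x := by
            intro h
            by_contra hne
            exact hz1 (Finset.mem_erase.mpr ⟨hne, h⟩)
          have hzdom : ∀ w ∈ D, G.Adj w z → w = x := by
            intro w hw hadj
            by_contra hne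
            exact hz2 w (Finset.mem_erase.mpr ⟨hne, hw⟩) hadj
          rcases hxsup z with hzin | ⟨u', hu', hu'adj⟩
          · have hzx : z ≠ x := Finset.ne_of_mem_erase hzin
            rcases Finset.mem_union.mp (Finset.mem_of_mem_erase hzin) with hzE | hzP
            · exact hzx (hzD (Finset.mem_of_mem_erase hzE))
            · exact hxc (hzdom c hc ((hPmem z).mp hzP).2.1).symm
          · have hu'x : u' ≠ x := Finset.ne_of_mem_erase hu'
            rcases Finset.mem_union.mp (Finset.mem_of_mem_erase hu') with hu'E | hu'P
            · exact hu'x (hzdom u' (Finset.mem_of_mem_erase hu'E) hu'adj)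
            · obtain ⟨hu'nD, hcu', hu'all⟩ := (hPmem u').mp hu'P
              by_cases hzx : z = x
              · subst hzx
                exact hxc (hu'all z hx hu'adj.symm)
              · have hznD : z ∉ D := fun h => hzx (hzD h)
                have hxzadj : G.Adj x z := by
                  rcases hdom z with h | ⟨w, hw, hadj⟩
                  · exact absurd h hznD
                  · have hwx := hzdom w hw hadj
                    exact hwx ▸ hadj
                have du' : G.dist u' r = G.dist c r + 1 := hPdepth u' hu'P
                have dz : G.dist z r = G.dist u' r + 1 := by
                  rcases tree_adj_dist G hT r hu'adj with h | h
                  · exfalso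
                    have hzc : z = c :=
                      tree_parent_unique G hT r hu'adj hcu'.symm (by omega) (by omega)
                    exact hznD (hzc ▸ hc)
                  · exact h
                have dx : G.dist x r = G.dist z r + 1 := by
                  rcases tree_adj_dist G hT r hxzadj with h | h
                  · exact h
                  · exfalso
                    have hxu' : x = u' :=
                      tree_parent_unique G hT r hxzadj.symm hu'adj.symm (by omega) (by omega)
                    exact hu'nD (hxu' ▸ hx)
                have hqz : q = z :=
                  tree_parent_unique G hT r hqadj.symm hxzadj (by omega) (by omega)
                exact hznD (hqz ▸ hqD)
      · -- q ∈ P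
        obtain ⟨_, _, hqall⟩ := (hPmem q).mp hqP
        exact hxc (hqall x hx hqadj.symm)
    · -- x ∈ P : x is critical in D', contradiction with hxsup
      exfalso
      obtain ⟨hxnD, hcx, hxall⟩ := (hPmem x).mp hxP0
      rcases hxsup x with h | ⟨u, hu, huadj⟩
      · exact (Finset.notMem_erase _ _) h
      · rcases Finset.mem_union.mp (Finset.mem_of_mem_erase hu) with huE | huP
        · exact (Finset.ne_of_mem_erase huE) (hxall u (Finset.mem_of_mem_erase huE) huadj)
        · have d1 : G.dist u r = G.dist c r + 1 := hPdepth u huP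
          have d2 : G.dist x r = G.dist c r + 1 := hPdepth x hxP0
          exact tree_adj_dist_ne G hT r huadj (by omega)
  case _ => -- cardinality
    have hdisj : Disjoint (D.erase c) P :=
      Finset.disjoint_left.mpr fun a ha hb => ((hPmem a).mp hb).1 (Finset.mem_of_mem_erase ha)
    rw [Finset.card_union_of_disjoint hdisj, Finset.card_erase_of_mem hc]
    have h1 : 1 ≤ P.card := Finset.card_pos.mpr hPne
    have h2 : 1 ≤ D.card := Finset.card_pos.mpr ⟨c, hc⟩
    omega
  case _ => -- depth sum
    have hdisj : Disjoint (D.erase c) P :=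
      Finset.disjoint_left.mpr fun a ha hb => ((hPmem a).mp hb).1 (Finset.mem_of_mem_erase ha)
    rw [Finset.sum_union hdisj]
    have h5 : (∑ w ∈ D.erase c, G.dist w r) + G.dist c r = ∑ w ∈ D, G.dist w r :=
      Finset.sum_erase_add D _ hc
    have h6 : ∑ w ∈ P, G.dist w r = P.card * (G.dist c r + 1) := by
      rw [Finset.sum_congr rfl hPdepth, Finset.sum_const, smul_eq_mul]
    have h7 : G.dist c r + 1 ≤ P.card * (G.dist c r + 1) :=
      Nat.le_mul_of_pos_left _ (Finset.card_pos.mpr hPne)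
    have h8 : G.dist c r + 1 ≤ ∑ w ∈ P, G.dist w r := h6 ▸ h7
    omega

lemma aux_lemma (G : SimpleGraph V) (hT : G.IsTree) (r : V) :
    ∀ (k : ℕ) (D : Finset V), IsDomSet G D →
    (∀ x ∈ D, IsDomSet G (D.erase x) → ∀ q : V, IsParent G r q x → q ∉ D) →
    (∑ w : V, G.dist w r) ≤ k + ∑ w ∈ D, G.dist w r →
    ∃ M : Finset V, MinimalDomSet G M ∧ D.card ≤ M.card := by
  intro k
  induction k with
  | zero =>
    intro D hdom hinv hb
    by_cases hex : ∃ v ∈ D, IsDomSet G (D.erase v)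
    · exfalso
      obtain ⟨D', _, _, _, hmu⟩ := step_lemma G hT r D hdom hinv hex
      have hB' : (∑ w ∈ D', G.dist w r) ≤ ∑ w : V, G.dist w r :=
        Finset.sum_le_sum_of_subset (Finset.subset_univ D')
      omega
    · push_neg at hex
      refine ⟨D, ⟨hdom, ?_⟩, le_rfl⟩
      intro T hTD hTdom
      obtain ⟨x, hxD, hxT⟩ := Finset.exists_of_ssubset hTD
      exact hex x hxD (isDomSet_mono G
        (fun y hy => Finset.mem_erase.mpr ⟨fun h => hxT (h ▸ hy), hTD.1 hy⟩) hTdom)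
  | succ k ih =>
    intro D hdom hinv hb
    by_cases hex : ∃ v ∈ D, IsDomSet G (D.erase v)
    · obtain ⟨D', hdom', hinv', hcard, hmu⟩ := step_lemma G hT r D hdom hinv hex
      obtain ⟨M, hM, hMcard⟩ := ih D' hdom' hinv' (by omega)
      exact ⟨M, hM, le_trans hcard hMcard⟩
    · push_neg at hex
      refine ⟨D, ⟨hdom, ?_⟩, le_rfl⟩
      intro T hTD hTdom
      obtain ⟨x, hxD, hxT⟩ := Finset.exists_of_ssubset hTD
      exact hex x hxD (isDomSet_mono G
        (fun y hy => Finset.mem_erase.mpr ⟨fun h => hxT (h ▸ hy), hTD.1 hy⟩) hTdom)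

theorem exists_minimal_dominating_set_ge (G : SimpleGraph V) (hT : G.IsTree) (r : V)
    (M0 : Finset V) (hM0 : IsDomSet G M0)
    (ha : ∀ v ∈ M0 \ aSet G M0, v ≠ r → ∀ p : V, IsParent G r p v → p ∉ M0)
    (hb : ∀ x ∈ M0 \ aSet G M0, ∀ y ∈ M0 \ aSet G M0, x ≠ y → ¬ Descendant G r x y) :
    ∃ M : Finset V, MinimalDomSet G M ∧ M0.card ≤ M.card := by
  apply aux_lemma G hT r (∑ w : V, G.dist w r) M0 hM0
  · intro x hx hsup q hq
    by_cases hxr : x = r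
    · rw [hxr] at hq
      exact absurd hq (not_isParent_root G r q)
    · refine ha x ?_ hxr q hq
      rw [Finset.mem_sdiff]
      refine ⟨hx, ?_⟩
      simp [aSet, hx, hsup]
  · exact Nat.le_add_right _ _
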